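/- Let R be a semiring, M an R-module, and S a submodule of M. Then the additive congruence on M generated by the set of pairs {(s, 0) : s ∈ S} relates elements x and y if and only if there exist s, s' ∈ S with x + s = y + s'. -/

import Mathlib

/-- For a submodule `S` of a module `M` over a semiring, the additive
congruence generated by `s ∼ 0` for `s ∈ S` relates `x` and `y` iff
`x + s = y + s'` for some `s, s' ∈ S`. -/
theorem stmt_11 {R : Type*} [Semiring R] {M : Type*} [AddCommMonoid M]
    [Module R M] (S : Submodule R M) (x y : M) :
    addConGen (fun a b : M => a ∈ S ∧ b = 0) x y ↔
      ∃ s ∈ S, ∃ s' ∈ S, x + s = y + s' := by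
  constructor
  · intro h
    let c : AddCon M :=
      { r := fun a b => ∃ s ∈ S, ∃ s' ∈ S, a + s = b + s'
        iseqv := by
          constructor
          · intro a; exact ⟨0, S.zero_mem, 0, S.zero_mem, rfl⟩
          · rintro a b ⟨s, hs, s', hs', h⟩; exact ⟨s', hs', s, hs, h.symm⟩
          · rintro a b cc ⟨s, hs, s', hs', h1⟩ ⟨t, ht, t', ht', h2⟩
            refine ⟨s + t, S.add_mem hs ht, t' + s', S.add_mem ht' hs', ?_⟩
            calc a + (s + t) = a + s + t := by rw [add_assoc]
              _ = b + s' + t := by rw [h1]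
              _ = b + t + s' := by rw [add_assoc, add_comm s' t, ← add_assoc]
              _ = cc + t' + s' := by rw [h2]
              _ = cc + (t' + s') := by rw [add_assoc]
        add' := by
          rintro a b p q ⟨s, hs, s', hs', h1⟩ ⟨t, ht, t', ht', h2⟩
          refine ⟨s + t, S.add_mem hs ht, s' + t', S.add_mem hs' ht', ?_⟩
          calc a + p + (s + t) = (a + s) + (p + t) := by abel
            _ = (b + s') + (q + t') := by rw [h1, h2]
            _ = b + q + (s' + t') := by abel }
    exact (AddCon.addConGen_le (c := c)).mpr (fun a b (hab : a ∈ S ∧ b = 0) => ⟨0, S.zero_mem, a, hab.1,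
      by simp [hab.2]⟩) h
  · rintro ⟨s, hs, s', hs', h⟩
    have h1 : addConGen (fun a b : M => a ∈ S ∧ b = 0) (x + s) x := by
      have := (addConGen (fun a b : M => a ∈ S ∧ b = 0)).add
        ((addConGen _).refl x) (AddConGen.Rel.of s 0 ⟨hs, rfl⟩)
      simpa using this
    have h2 : addConGen (fun a b : M => a ∈ S ∧ b = 0) (y + s') y := by
      have := (addConGen (fun a b : M => a ∈ S ∧ b = 0)).add
        ((addConGen _).refl y) (AddConGen.Rel.of s' 0 ⟨hs', rfl⟩)
      simpa using this
    exact ((addConGen _).symm h1).trans (h ▸ h2)
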